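/- The conditional law of σ_0 given the event {σ_0 ≤ τ_0} (i.e. given that the busy period consists of a single customer) equals Exp(λ+μ), and the conditional law of σ_0 given the event {σ_0 > τ_0} (i.e. given that the busy period contains more than one customer) equals Exp(λ+μ) ⋆ Exp(μ). -/

import Mathlib

open MeasureTheory ProbabilityTheory

section CondLawAuxSection
open Real Set
open scoped ENNReal




lemma expMeasure_eq (r : ℝ) : expMeasure r = volume.withDensity (exponentialPDF r) := rfl

lemma measurable_exponentialPDF (r : ℝ) : Measurable (exponentialPDF r) :=
  (measurable_exponentialPDFReal r).ennreal_ofReal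

lemma expMeasure_apply (r : ℝ) {s : Set ℝ} (hs : MeasurableSet s) :
    expMeasure r s = ∫⁻ x in s, exponentialPDF r x := by
  rw [expMeasure_eq, withDensity_apply _ hs]

lemma expMeasure_Iic {r : ℝ} (hr : 0 < r) (x : ℝ) :
    expMeasure r (Iic x) = ENNReal.ofReal (if 0 ≤ x then 1 - Real.exp (-(r*x)) else 0) := by
  rw [expMeasure_apply r measurableSet_Iic, lintegral_exponentialPDF_eq_antiDeriv hr]

lemma expMeasure_singleton (r : ℝ) (x : ℝ) : expMeasure r {x} = 0 := by
  rw [expMeasure_apply r (measurableSet_singleton x)]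
  rw [Measure.restrict_eq_zero.2 (by simp), lintegral_zero_measure]

lemma expMeasure_Iio {r : ℝ} (hr : 0 < r) (x : ℝ) :
    expMeasure r (Iio x) = ENNReal.ofReal (if 0 ≤ x then 1 - Real.exp (-(r*x)) else 0) := by
  rw [← expMeasure_Iic hr]
  refine le_antisymm (measure_mono Iio_subset_Iic_self) ?_
  calc expMeasure r (Iic x) ≤ expMeasure r (Iio x) + expMeasure r {x} := by
        rw [← Iio_union_right]; exact measure_union_le _ _
    _ = expMeasure r (Iio x) := by rw [expMeasure_singleton, add_zero]

lemma expMeasure_Ici {r : ℝ} (hr : 0 < r) {u : ℝ} (hu : 0 ≤ u) :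
    expMeasure r (Ici u) = ENNReal.ofReal (Real.exp (-(r*u))) := by
  have : IsProbabilityMeasure (expMeasure r) := isProbabilityMeasure_expMeasure hr
  have h := measure_compl (μ := expMeasure r) (s := Iio u) measurableSet_Iio (measure_ne_top _ _)
  rw [compl_Iio] at h
  rw [h, expMeasure_Iio hr, if_pos hu, measure_univ, ← ENNReal.ofReal_one,
    ← ENNReal.ofReal_sub _ (sub_nonneg.2 (Real.exp_le_one_iff.2 (by nlinarith)))]
  norm_num

lemma integral_exp_neg_mul (c x : ℝ) (hc : c ≠ 0) :
    ∫ s in (0:ℝ)..x, Real.exp (-(c*s)) = (1 - Real.exp (-(c*x)))/c := by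
  have h : ∀ s ∈ Set.uIcc (0:ℝ) x,
      HasDerivAt (fun t => -Real.exp (-(c*t))/c) (Real.exp (-(c*s))) s := by
    intro s _
    have h2 := (ProbabilityTheory.hasDerivAt_neg_exp_mul_exp (r := c) (x := s)).div_const c
    simpa [mul_div_assoc, mul_div_cancel_left₀ _ hc] using h2
  rw [intervalIntegral.integral_eq_sub_of_hasDerivAt h
    (Continuous.intervalIntegrable (by continuity) _ _)]
  field_simp
  simp only [mul_zero, neg_zero, Real.exp_zero]; ring

lemma lintegral_expMeasure (r : ℝ) {g : ℝ → ℝ≥0∞} (hg : Measurable g) {s : Set ℝ}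
    (hs : MeasurableSet s) :
    ∫⁻ u in s, g u ∂(expMeasure r) = ∫⁻ u in s, g u * exponentialPDF r u := by
  rw [expMeasure_eq, restrict_withDensity hs,
    lintegral_withDensity_eq_lintegral_mul _ (measurable_exponentialPDF r) hg]
  simp [mul_comm]

lemma lint_ofReal_Icc {f : ℝ → ℝ} (hf : Continuous f) {x : ℝ} (hx : 0 ≤ x)
    (h0 : ∀ u ∈ Icc (0:ℝ) x, 0 ≤ f u) :
    ∫⁻ u in Icc (0:ℝ) x, ENNReal.ofReal (f u) = ENNReal.ofReal (∫ u in (0:ℝ)..x, f u) := by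
  rw [← ofReal_integral_eq_lintegral_ofReal (hf.integrableOn_Icc)
    ((ae_restrict_iff' measurableSet_Icc).2 (ae_of_all _ h0))]
  rw [intervalIntegral.integral_of_le hx, integral_Icc_eq_integral_Ioc]

lemma key1 {lam mu : ℝ} (hlam : 0 < lam) (hmu : 0 < mu) {s : Set ℝ} (hs : MeasurableSet s) :
    ∫⁻ u in s, expMeasure lam (Ici u) ∂(expMeasure mu)
      = ENNReal.ofReal (mu/(lam+mu)) * expMeasure (lam+mu) s := by
  have hmeas : Measurable fun u => expMeasure lam (Ici u) :=
    Antitone.measurable (fun a b hab => measure_mono (Ici_subset_Ici.2 hab))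
  rw [lintegral_expMeasure mu hmeas hs]
  have hpt : ∀ u, expMeasure lam (Ici u) * exponentialPDF mu u
      = ENNReal.ofReal (mu/(lam+mu)) * exponentialPDF (lam+mu) u := by
    intro u
    rcases lt_or_ge u 0 with hu | hu
    · rw [exponentialPDF_of_neg hu, exponentialPDF_of_neg hu, mul_zero, mul_zero]
    · rw [expMeasure_Ici hlam hu, exponentialPDF_of_nonneg hu, exponentialPDF_of_nonneg hu,
        ← ENNReal.ofReal_mul (by positivity), ← ENNReal.ofReal_mul (by positivity)]
      congr 1
      have he : Real.exp (-((lam+mu)*u)) = Real.exp (-(lam*u)) * Real.exp (-(mu*u)) := by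
        rw [← Real.exp_add]; ring_nf
      rw [he]
      field_simp
  simp_rw [hpt]
  rw [lintegral_const_mul _ (measurable_exponentialPDF _), ← expMeasure_apply _ hs]

lemma key2 {lam mu : ℝ} (hlam : 0 < lam) (hmu : 0 < mu) (x : ℝ) :
    ∫⁻ u in Iic x, expMeasure lam (Iio u) ∂(expMeasure mu)
      = ∫⁻ u in Icc (0:ℝ) x,
          ENNReal.ofReal ((1 - Real.exp (-(lam*u))) * (mu * Real.exp (-(mu*u)))) := by
  have hmeas : Measurable fun u => expMeasure lam (Iio u) :=
    Monotone.measurable (fun a b hab => measure_mono (Iio_subset_Iio hab))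
  rw [lintegral_expMeasure mu hmeas measurableSet_Iic]
  rw [← lintegral_indicator measurableSet_Iic _, ← lintegral_indicator measurableSet_Icc _]
  congr 1
  funext u
  by_cases h1 : u ≤ x
  · by_cases h2 : (0:ℝ) ≤ u
    · rw [Set.indicator_of_mem (mem_Iic.2 h1), Set.indicator_of_mem (mem_Icc.2 ⟨h2, h1⟩),
        expMeasure_Iio hlam, if_pos h2, exponentialPDF_of_nonneg h2,
        ← ENNReal.ofReal_mul (sub_nonneg.2 (Real.exp_le_one_iff.2 (by nlinarith)))]
    · rw [Set.indicator_of_mem (mem_Iic.2 h1),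
        Set.indicator_of_notMem (by simp [mem_Icc, h2]),
        exponentialPDF_of_neg (lt_of_not_ge h2), mul_zero]
  · rw [Set.indicator_of_notMem (by simpa using h1),
      Set.indicator_of_notMem (by simp [mem_Icc]; intro h; linarith)]

lemma conv_Iic {a b : ℝ} (ha : 0 < a) (hb : 0 < b) (x : ℝ) :
    ((expMeasure a).conv (expMeasure b)) (Iic x)
      = ∫⁻ s in Icc (0:ℝ) x,
          ENNReal.ofReal ((1 - Real.exp (-(b*(x-s)))) * (a * Real.exp (-(a*s)))) := by
  have : IsProbabilityMeasure (expMeasure a) := isProbabilityMeasure_expMeasure ha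
  have : IsProbabilityMeasure (expMeasure b) := isProbabilityMeasure_expMeasure hb
  rw [Measure.conv, Measure.map_apply (by fun_prop) measurableSet_Iic]
  have hpre : (fun p : ℝ × ℝ => p.1 + p.2) ⁻¹' (Iic x) = {p : ℝ × ℝ | p.1 + p.2 ≤ x} := rfl
  rw [hpre, Measure.prod_apply (by exact measurableSet_le (measurable_fst.add measurable_snd) measurable_const)]
  have hslice : ∀ s : ℝ, (Prod.mk s ⁻¹' {p : ℝ × ℝ | p.1 + p.2 ≤ x}) = Iic (x - s) := by
    intro s; ext v; simp [mem_Iic]; constructor <;> intro h <;> linarith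
  simp_rw [hslice]
  have hmeas : Measurable fun s => expMeasure b (Iic (x - s)) :=
    Antitone.measurable (fun p q hpq => measure_mono (Iic_subset_Iic.2 (by linarith)))
  rw [← Measure.restrict_univ (μ := expMeasure a), lintegral_expMeasure a hmeas MeasurableSet.univ,
    Measure.restrict_univ, ← lintegral_indicator measurableSet_Icc _]
  congr 1
  funext s
  by_cases h2 : (0:ℝ) ≤ s
  · by_cases h1 : s ≤ x
    · rw [Set.indicator_of_mem (mem_Icc.2 ⟨h2, h1⟩), expMeasure_Iic hb, if_pos (by linarith),
        exponentialPDF_of_nonneg h2,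
        ← ENNReal.ofReal_mul (sub_nonneg.2 (Real.exp_le_one_iff.2 (by nlinarith)))]
    · rw [Set.indicator_of_notMem (by simp [mem_Icc]; intro h; linarith),
        expMeasure_Iic hb, if_neg (by push_neg at h1 ⊢; linarith), ENNReal.ofReal_zero, zero_mul]
  · rw [Set.indicator_of_notMem (by simp [mem_Icc, h2]),
      exponentialPDF_of_neg (lt_of_not_ge h2), mul_zero]



lemma key2val {lam mu : ℝ} (hlam : 0 < lam) (hmu : 0 < mu) (x : ℝ) :
    ∫ u in (0:ℝ)..x, (1 - Real.exp (-(lam*u))) * (mu * Real.exp (-(mu*u)))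
      = (1 - Real.exp (-(mu*x))) - mu/(lam+mu)*(1 - Real.exp (-((lam+mu)*x))) := by
  have hpt : ∀ u : ℝ, (1 - Real.exp (-(lam*u))) * (mu * Real.exp (-(mu*u)))
      = mu * Real.exp (-(mu*u)) - mu * Real.exp (-((lam+mu)*u)) := by
    intro u
    have he : Real.exp (-((lam+mu)*u)) = Real.exp (-(lam*u)) * Real.exp (-(mu*u)) := by
      rw [← Real.exp_add]; ring_nf
    rw [he]; ring
  rw [intervalIntegral.integral_congr (fun u _ => hpt u)]
  rw [intervalIntegral.integral_sub
      ((Continuous.intervalIntegrable (by continuity) _ _))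
      ((Continuous.intervalIntegrable (by continuity) _ _)),
    intervalIntegral.integral_const_mul, intervalIntegral.integral_const_mul,
    integral_exp_neg_mul _ _ hmu.ne', integral_exp_neg_mul _ _ (by positivity)]
  field_simp

lemma key3val {lam mu : ℝ} (hlam : 0 < lam) (hmu : 0 < mu) (x : ℝ) :
    ∫ s in (0:ℝ)..x, (1 - Real.exp (-(mu*(x-s)))) * ((lam+mu) * Real.exp (-((lam+mu)*s)))
      = (1 - Real.exp (-((lam+mu)*x)))
        - (lam+mu) * Real.exp (-(mu*x)) * (1 - Real.exp (-(lam*x))) / lam := by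
  have hpt : ∀ s : ℝ, (1 - Real.exp (-(mu*(x-s)))) * ((lam+mu) * Real.exp (-((lam+mu)*s)))
      = (lam+mu) * Real.exp (-((lam+mu)*s))
        - (lam+mu) * Real.exp (-(mu*x)) * Real.exp (-(lam*s)) := by
    intro s
    have he : Real.exp (-(mu*(x-s))) * Real.exp (-((lam+mu)*s))
        = Real.exp (-(mu*x)) * Real.exp (-(lam*s)) := by
      rw [← Real.exp_add, ← Real.exp_add]; ring_nf
    calc (1 - Real.exp (-(mu*(x-s)))) * ((lam+mu) * Real.exp (-((lam+mu)*s)))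
        = (lam+mu) * Real.exp (-((lam+mu)*s))
          - (lam+mu) * (Real.exp (-(mu*(x-s))) * Real.exp (-((lam+mu)*s))) := by ring
      _ = _ := by rw [he]; ring
  rw [intervalIntegral.integral_congr (fun s _ => hpt s)]
  rw [intervalIntegral.integral_sub
      ((Continuous.intervalIntegrable (by continuity) _ _))
      ((Continuous.intervalIntegrable (by continuity) _ _)),
    intervalIntegral.integral_const_mul, intervalIntegral.integral_const_mul,
    integral_exp_neg_mul _ _ hlam.ne', integral_exp_neg_mul _ _ (by positivity : (0:ℝ) < lam+mu).ne']
  field_simp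




end CondLawAuxSection

set_option maxHeartbeats 1000000 in
/-- with `τ_0 ~ Exp(λ)` and `σ_0 ~ Exp(μ)` independent, the conditional law of
`σ_0` given `{σ_0 ≤ τ_0}` is `Exp(λ+μ)`, and the conditional law of `σ_0` given `{σ_0 > τ_0}`
is `Exp(λ+μ) ⋆ Exp(μ)`. -/
theorem condLaw_first_service
    {Ω : Type*} [MeasurableSpace Ω] (P : Measure Ω) [IsProbabilityMeasure P]
    (lam mu : ℝ) (hlam : 0 < lam) (hmu : 0 < mu)
    (τ₀ σ₀ : Ω → ℝ) (hτm : Measurable τ₀) (hσm : Measurable σ₀)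
    (hindep : IndepFun τ₀ σ₀ P)
    (hτ : P.map τ₀ = expMeasure lam) (hσ : P.map σ₀ = expMeasure mu) :
    (P[|{ω | σ₀ ω ≤ τ₀ ω}]).map σ₀ = expMeasure (lam + mu) ∧
    (P[|{ω | τ₀ ω < σ₀ ω}]).map σ₀ = (expMeasure (lam + mu)).conv (expMeasure mu) := by
  open Real Set in
  have hlm : (0:ℝ) < lam + mu := by positivity
  have hPmu : IsProbabilityMeasure (expMeasure mu) := isProbabilityMeasure_expMeasure hmu
  have hPl : IsProbabilityMeasure (expMeasure lam) := isProbabilityMeasure_expMeasure hlam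
  have hPlm : IsProbabilityMeasure (expMeasure (lam+mu)) := isProbabilityMeasure_expMeasure hlm
  have hpair : Measurable fun ω => (σ₀ ω, τ₀ ω) := hσm.prodMk hτm
  have hJ : P.map (fun ω => (σ₀ ω, τ₀ ω)) = (expMeasure mu).prod (expMeasure lam) := by
    have h := (indepFun_iff_map_prod_eq_prod_map_map hσm.aemeasurable hτm.aemeasurable).1
      hindep.symm
    rw [hσ, hτ] at h; exact h
  have hjoint : ∀ {S : Set (ℝ × ℝ)}, MeasurableSet S →
      P ((fun ω => (σ₀ ω, τ₀ ω)) ⁻¹' S) = ((expMeasure mu).prod (expMeasure lam)) S := by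
    intro S hS
    rw [← hJ, Measure.map_apply hpair hS]
  have hAset : MeasurableSet {ω | σ₀ ω ≤ τ₀ ω} := measurableSet_le hσm hτm
  have hA'set : MeasurableSet {ω | τ₀ ω < σ₀ ω} := measurableSet_lt hτm hσm
  -- the first intersection formula
  have hAint : ∀ {s : Set ℝ}, MeasurableSet s →
      P ({ω | σ₀ ω ≤ τ₀ ω} ∩ σ₀ ⁻¹' s)
        = ENNReal.ofReal (mu/(lam+mu)) * expMeasure (lam+mu) s := by
    intro s hs
    have hSmeas : MeasurableSet {p : ℝ × ℝ | p.1 ≤ p.2 ∧ p.1 ∈ s} :=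
      (measurableSet_le measurable_fst measurable_snd).inter (measurable_fst hs)
    have hSet : {ω | σ₀ ω ≤ τ₀ ω} ∩ σ₀ ⁻¹' s
        = (fun ω => (σ₀ ω, τ₀ ω)) ⁻¹' {p : ℝ × ℝ | p.1 ≤ p.2 ∧ p.1 ∈ s} := rfl
    rw [hSet, hjoint hSmeas, Measure.prod_apply hSmeas]
    have hslice : (fun u => expMeasure lam (Prod.mk u ⁻¹' {p : ℝ × ℝ | p.1 ≤ p.2 ∧ p.1 ∈ s}))
        = s.indicator (fun u => expMeasure lam (Ici u)) := by
      funext u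
      by_cases hu : u ∈ s
      · rw [Set.indicator_of_mem hu]
        congr 1
        ext v; simp [hu, mem_Ici]
      · rw [Set.indicator_of_notMem hu,
          show (Prod.mk u ⁻¹' {p : ℝ × ℝ | p.1 ≤ p.2 ∧ p.1 ∈ s}) = (∅ : Set ℝ) from by
            ext v; simp [hu], measure_empty]
    rw [hslice, lintegral_indicator hs _]
    exact key1 hlam hmu hs
  have hPA : P {ω | σ₀ ω ≤ τ₀ ω} = ENNReal.ofReal (mu/(lam+mu)) := by
    have h := hAint MeasurableSet.univ
    simpa using h
  have hc0 : ENNReal.ofReal (mu/(lam+mu)) ≠ 0 :=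
    (ENNReal.ofReal_pos.2 (by positivity)).ne'
  have hc0' : ENNReal.ofReal (lam/(lam+mu)) ≠ 0 :=
    (ENNReal.ofReal_pos.2 (by positivity)).ne'
  constructor
  · ext s hs
    rw [Measure.map_apply hσm hs, cond_apply hAset, hPA, hAint hs, ← mul_assoc,
      ENNReal.inv_mul_cancel hc0 ENNReal.ofReal_ne_top, one_mul]
  · -- second part
    have hA'c : {ω | τ₀ ω < σ₀ ω} = {ω | σ₀ ω ≤ τ₀ ω}ᶜ := by
      ext ω; simp [not_le]
    have hPA' : P {ω | τ₀ ω < σ₀ ω} = ENNReal.ofReal (lam/(lam+mu)) := by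
      rw [hA'c, measure_compl hAset (measure_ne_top _ _), hPA, measure_univ,
        show (lam/(lam+mu)) = 1 - mu/(lam+mu) from by field_simp; ring,
        ENNReal.ofReal_sub _ (by positivity), ENNReal.ofReal_one]
    have hA'int : ∀ x : ℝ, P ({ω | τ₀ ω < σ₀ ω} ∩ σ₀ ⁻¹' (Iic x))
        = ∫⁻ u in Icc (0:ℝ) x,
            ENNReal.ofReal ((1 - Real.exp (-(lam*u))) * (mu * Real.exp (-(mu*u)))) := by
      intro x
      have hSmeas : MeasurableSet {p : ℝ × ℝ | p.2 < p.1 ∧ p.1 ≤ x} :=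
        (measurableSet_lt measurable_snd measurable_fst).inter
          (measurable_fst measurableSet_Iic)
      have hSet : {ω | τ₀ ω < σ₀ ω} ∩ σ₀ ⁻¹' (Iic x)
          = (fun ω => (σ₀ ω, τ₀ ω)) ⁻¹' {p : ℝ × ℝ | p.2 < p.1 ∧ p.1 ≤ x} := rfl
      rw [hSet, hjoint hSmeas, Measure.prod_apply hSmeas]
      have hslice : (fun u => expMeasure lam (Prod.mk u ⁻¹' {p : ℝ × ℝ | p.2 < p.1 ∧ p.1 ≤ x}))
          = (Iic x).indicator (fun u => expMeasure lam (Iio u)) := by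
        funext u
        by_cases hu : u ≤ x
        · rw [Set.indicator_of_mem (mem_Iic.2 hu)]
          congr 1
          ext v; simp [hu, mem_Iio]
        · rw [Set.indicator_of_notMem (by simpa using hu),
            show (Prod.mk u ⁻¹' {p : ℝ × ℝ | p.2 < p.1 ∧ p.1 ≤ x}) = (∅ : Set ℝ) from by
              ext v; simp [hu], measure_empty]
      rw [hslice, lintegral_indicator measurableSet_Iic _]
      exact key2 hlam hmu x
    have hmap : IsProbabilityMeasure ((P[|{ω | τ₀ ω < σ₀ ω}]).map σ₀) := by
      have : IsProbabilityMeasure (P[|{ω | τ₀ ω < σ₀ ω}]) :=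
        cond_isProbabilityMeasure (by rw [hPA']; exact hc0')
      exact Measure.isProbabilityMeasure_map hσm.aemeasurable
    refine Measure.ext_of_Iic _ _ fun x => ?_
    rw [Measure.map_apply hσm measurableSet_Iic, cond_apply hA'set, hPA', hA'int x,
      conv_Iic hlm hmu x]
    rcases le_or_gt 0 x with hx | hx
    · rw [lint_ofReal_Icc (by continuity) hx (fun u hu => mul_nonneg
          (sub_nonneg.2 (Real.exp_le_one_iff.2 (by nlinarith [hu.1]))) (by positivity)),
        lint_ofReal_Icc (by continuity) hx (fun u hu => mul_nonneg
          (sub_nonneg.2 (Real.exp_le_one_iff.2 (by nlinarith [hu.1, hu.2]))) (by positivity)),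
        key2val hlam hmu x, key3val hlam hmu x]
      have hE : Real.exp (-((lam+mu)*x)) = Real.exp (-(lam*x)) * Real.exp (-(mu*x)) := by
        rw [← Real.exp_add]; ring_nf
      have hgen : ∀ A B : ℝ, (1 - B) - mu/(lam+mu)*(1 - A*B)
          = lam/(lam+mu) * ((1 - A*B) - (lam+mu) * B * (1 - A) / lam) := by
        intro A B
        field_simp
        ring
      have hid : (1 - Real.exp (-(mu*x))) - mu/(lam+mu)*(1 - Real.exp (-((lam+mu)*x)))
          = lam/(lam+mu) * ((1 - Real.exp (-((lam+mu)*x)))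
            - (lam+mu) * Real.exp (-(mu*x)) * (1 - Real.exp (-(lam*x))) / lam) := by
        rw [hE]; exact hgen _ _
      rw [hid, ENNReal.ofReal_mul (by positivity), ← mul_assoc,
        ENNReal.inv_mul_cancel hc0' ENNReal.ofReal_ne_top, one_mul]
    · rw [Icc_eq_empty (by linarith), Measure.restrict_empty, lintegral_zero_measure,
        lintegral_zero_measure, mul_zero]
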